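/- If ops is an edit script with ops(G1) = G2, then there exists a canonical edit script ops' with ops'(G1) = G2 and |ops'| ≤ |ops|. -/

import Mathlib

/-!
Property graphs, homomorphisms/isomorphisms/subgraphs, edit operations,
edit scripts, canonical scripts, graph edit distance, partial isomorphisms
and their cost, and the edit-script rewriting system of the paper
"Flexible graph matching and graph edit distance using answer set programming".
-/

universe u v w z

variable {ι : Type u} {L : Type v} {K : Type w} {D : Type z}

/-- A raw property-graph structure: finite sets of node and edge identifiers,
partial source/target/label functions (modelled via `Option`), and a partial
key-value property assignment. -/
structure PreGraph (ι : Type u) (L : Type v) (K : Type w) (D : Type z) where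
  V : Finset ι
  E : Finset ι
  src : ι → Option ι
  tgt : ι → Option ι
  lab : ι → Option L
  prop : ι → K → Option D

section Graphs

variable [DecidableEq ι]

/-- The invariants making a raw structure an actual property graph:
nodes and edges are disjoint, sources and targets are defined exactly on
edges and map into the node set, labels are defined exactly on nodes and
edges, and properties are defined only on nodes and edges. -/
structure IsPGraph (G : PreGraph ι L K D) : Prop where
  disj : Disjoint G.V G.E
  src_dom : ∀ e, (G.src e).isSome ↔ e ∈ G.E
  tgt_dom : ∀ e, (G.tgt e).isSome ↔ e ∈ G.E
  src_mem : ∀ e v, G.src e = some v → v ∈ G.V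
  tgt_mem : ∀ e v, G.tgt e = some v → v ∈ G.V
  lab_dom : ∀ x, (G.lab x).isSome ↔ x ∈ G.V ∪ G.E
  prop_dom : ∀ x k, (G.prop x k).isSome → x ∈ G.V ∪ G.E

/-- A homomorphism of property graphs (represented by a total function on
identifiers): maps nodes to nodes and edges to edges preserving labels,
sources, targets, and all defined properties. -/
structure IsHom (G1 G2 : PreGraph ι L K D) (h : ι → ι) : Prop where
  map_V : ∀ v ∈ G1.V, h v ∈ G2.V
  map_E : ∀ e ∈ G1.E, h e ∈ G2.E
  lab_eq : ∀ x ∈ G1.V ∪ G1.E, G2.lab (h x) = G1.lab x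
  src_eq : ∀ e ∈ G1.E, ∀ v, G1.src e = some v → G2.src (h e) = some (h v)
  tgt_eq : ∀ e ∈ G1.E, ∀ v, G1.tgt e = some v → G2.tgt (h e) = some (h v)
  prop_eq : ∀ x ∈ G1.V ∪ G1.E, ∀ k d, G1.prop x k = some d → G2.prop (h x) k = some d

/-- An isomorphism of property graphs: an invertible homomorphism whose
inverse is also a homomorphism. -/
def IsIso (G1 G2 : PreGraph ι L K D) (h : ι → ι) : Prop :=
  IsHom G1 G2 h ∧ ∃ g : ι → ι, IsHom G2 G1 g ∧
    (∀ x ∈ G1.V ∪ G1.E, g (h x) = x) ∧ (∀ y ∈ G2.V ∪ G2.E, h (g y) = y)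

/-- `G'` is a subgraph of `G`: `G'` is itself a property graph, its nodes and
edges are among those of `G`, and sources, targets, labels and defined
properties agree with those of `G`. -/
def IsSubgraph (G' G : PreGraph ι L K D) : Prop :=
  IsPGraph G' ∧ G'.V ⊆ G.V ∧ G'.E ⊆ G.E ∧
  (∀ e ∈ G'.E, G'.src e = G.src e ∧ G'.tgt e = G.tgt e) ∧
  (∀ x ∈ G'.V ∪ G'.E, G'.lab x = G.lab x) ∧
  (∀ x k d, G'.prop x k = some d → G.prop x k = some d)

end Graphs

/-- The seven edit operations on property graphs. -/
inductive EditOp (ι : Type u) (L : Type v) (K : Type w) (D : Type z) where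
  | insV (v : ι) (l : L)
  | insE (e v w : ι) (l : L)
  | insP (x : ι) (k : K) (d : D)
  | delV (v : ι)
  | delE (e : ι)
  | delP (x : ι) (k : K)
  | updP (x : ι) (k : K) (d : D)

section Edits

variable [DecidableEq ι] [DecidableEq K]

/-- The precondition of an edit operation on a graph. -/
def Applicable (op : EditOp ι L K D) (G : PreGraph ι L K D) : Prop :=
  match op with
  | .insV v _ => v ∉ G.V ∪ G.E
  | .insE e v w _ => v ∈ G.V ∧ w ∈ G.V ∧ e ∉ G.V ∪ G.E
  | .insP x k _ => x ∈ G.V ∪ G.E ∧ G.prop x k = none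
  | .delV v => v ∈ G.V ∧ (∀ e ∈ G.E, G.src e ≠ some v ∧ G.tgt e ≠ some v) ∧
      (∀ k, G.prop v k = none)
  | .delE e => e ∈ G.E ∧ (∀ k, G.prop e k = none)
  | .delP x k => (G.prop x k).isSome
  | .updP x k _ => (G.prop x k).isSome

/-- The effect of an edit operation on a graph. -/
def applyOp (op : EditOp ι L K D) (G : PreGraph ι L K D) : PreGraph ι L K D :=
  match op with
  | .insV v l =>
      { G with
        V := (insert v G.V)
        lab := fun x => if x = v then some l else G.lab x }
  | .insE e v w l =>
      { G with
        E := (insert e G.E)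
        src := fun x => if x = e then some v else G.src x
        tgt := fun x => if x = e then some w else G.tgt x
        lab := fun x => if x = e then some l else G.lab x }
  | .insP x k d =>
      { G with prop := fun y k' => if y = x ∧ k' = k then some d else G.prop y k' }
  | .delV v =>
      { G with
        V := (G.V.erase v)
        lab := fun x => if x = v then none else G.lab x }
  | .delE e =>
      { G with
        E := (G.E.erase e)
        src := fun x => if x = e then none else G.src x
        tgt := fun x => if x = e then none else G.tgt x
        lab := fun x => if x = e then none else G.lab x }
  | .delP x k =>
      { G with prop := fun y k' => if y = x ∧ k' = k then none else G.prop y k' }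
  | .updP x k d =>
      { G with prop := fun y k' => if y = x ∧ k' = k then some d else G.prop y k' }

/-- An edit script is valid on `G` if each operation is applicable in the
graph produced by the preceding ones. -/
inductive ValidScript : PreGraph ι L K D → List (EditOp ι L K D) → Prop where
  | nil (G : PreGraph ι L K D) : ValidScript G []
  | cons {G : PreGraph ι L K D} {op : EditOp ι L K D} {ops : List (EditOp ι L K D)} :
      Applicable op G → ValidScript (applyOp op G) ops → ValidScript G (op :: ops)

/-- The result `ops(G)` of applying an edit script in order. -/
def applyScript (ops : List (EditOp ι L K D)) (G : PreGraph ι L K D) : PreGraph ι L K D :=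
  ops.foldl (fun g op => applyOp op g) G

/-- A canonical edit script: property deletions, then edge deletions, then
node deletions, then property updates, then node insertions, then edge
insertions, then property insertions. -/
def Canonical (ops : List (EditOp ι L K D)) : Prop :=
  ∃ dp de dv up iv ie ip : List (EditOp ι L K D),
    ops = dp ++ de ++ dv ++ up ++ iv ++ ie ++ ip ∧
    (∀ op ∈ dp, ∃ x k, op = EditOp.delP x k) ∧
    (∀ op ∈ de, ∃ e, op = EditOp.delE e) ∧
    (∀ op ∈ dv, ∃ v, op = EditOp.delV v) ∧
    (∀ op ∈ up, ∃ x k d, op = EditOp.updP x k d) ∧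
    (∀ op ∈ iv, ∃ v l, op = EditOp.insV v l) ∧
    (∀ op ∈ ie, ∃ e v w l, op = EditOp.insE e v w l) ∧
    (∀ op ∈ ip, ∃ x k d, op = EditOp.insP x k d)

/-- The set of lengths of valid edit scripts transforming `G1` into a graph
isomorphic to `G2`. -/
def GEDSet (G1 G2 : PreGraph ι L K D) : Set ℕ :=
  {n | ∃ ops : List (EditOp ι L K D), ValidScript G1 ops ∧
        (∃ f : ι → ι, IsIso (applyScript ops G1) G2 f) ∧ ops.length = n}

/-- The graph edit distance: the minimum length of a valid edit script
transforming `G1` into a graph isomorphic to `G2`. -/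
noncomputable def GED (G1 G2 : PreGraph ι L K D) : ℕ :=
  sInf (GEDSet G1 G2)

/-- The number of defined properties of a graph. -/
def propCount [Fintype K] (G : PreGraph ι L K D) : ℕ :=
  ∑ x ∈ G.V ∪ G.E, (Finset.univ.filter fun k : K => (G.prop x k).isSome).card

end Edits

/-- A possibly-marked edit operation: the boolean records whether the
operation is marked (`op*`). -/
abbrev MOp (ι : Type u) (L : Type v) (K : Type w) (D : Type z) :=
  EditOp ι L K D × Bool

/-- The edit-script rewrite rules of Figure 5 of the paper, acting on the
marked operation and the operation immediately following it. -/
inductive RewStep : List (MOp ι L K D) → List (MOp ι L K D) → Prop where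
  | delE_delP (e x : ι) (k : K) :
      RewStep [(.delE e, true), (.delP x k, false)] [(.delP x k, false), (.delE e, true)]
  | delV_delP (v x : ι) (k : K) :
      RewStep [(.delV v, true), (.delP x k, false)] [(.delP x k, false), (.delV v, true)]
  | delV_delE (v e : ι) :
      RewStep [(.delV v, true), (.delE e, false)] [(.delE e, false), (.delV v, true)]
  | updP_delP_same (x : ι) (k : K) (d : D) :
      RewStep [(.updP x k d, true), (.delP x k, false)] [(.delP x k, false)]
  | updP_delP_ne (x y : ι) (k k' : K) (d : D) (h : ¬(x = y ∧ k = k')) :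
      RewStep [(.updP x k d, true), (.delP y k', false)]
        [(.delP y k', false), (.updP x k d, true)]
  | updP_delE (x : ι) (k : K) (d : D) (e : ι) :
      RewStep [(.updP x k d, true), (.delE e, false)] [(.delE e, false), (.updP x k d, true)]
  | updP_delV (x : ι) (k : K) (d : D) (v : ι) :
      RewStep [(.updP x k d, true), (.delV v, false)] [(.delV v, false), (.updP x k d, true)]
  | insV_delP (v : ι) (l : L) (x : ι) (k : K) :
      RewStep [(.insV v l, true), (.delP x k, false)] [(.delP x k, false), (.insV v l, true)]
  | insV_delE (v : ι) (l : L) (e : ι) :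
      RewStep [(.insV v l, true), (.delE e, false)] [(.delE e, false), (.insV v l, true)]
  | insV_delV_same (v : ι) (l : L) :
      RewStep [(.insV v l, true), (.delV v, false)] []
  | insV_delV_ne (v : ι) (l : L) (v' : ι) (h : v ≠ v') :
      RewStep [(.insV v l, true), (.delV v', false)] [(.delV v', false), (.insV v l, true)]
  | insV_updP (v : ι) (l : L) (x : ι) (k : K) (d : D) :
      RewStep [(.insV v l, true), (.updP x k d, false)]
        [(.updP x k d, false), (.insV v l, true)]
  | insE_delP (e v w : ι) (l : L) (x : ι) (k : K) :
      RewStep [(.insE e v w l, true), (.delP x k, false)]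
        [(.delP x k, false), (.insE e v w l, true)]
  | insE_delE_same (e v w : ι) (l : L) :
      RewStep [(.insE e v w l, true), (.delE e, false)] []
  | insE_delE_ne (e v w : ι) (l : L) (e' : ι) (h : e ≠ e') :
      RewStep [(.insE e v w l, true), (.delE e', false)]
        [(.delE e', false), (.insE e v w l, true)]
  | insE_delV (e v w : ι) (l : L) (v' : ι) :
      RewStep [(.insE e v w l, true), (.delV v', false)]
        [(.delV v', false), (.insE e v w l, true)]
  | insE_updP (e v w : ι) (l : L) (x : ι) (k : K) (d : D) :
      RewStep [(.insE e v w l, true), (.updP x k d, false)]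
        [(.updP x k d, false), (.insE e v w l, true)]
  | insE_insV (e v w : ι) (l : L) (v' : ι) (l' : L) :
      RewStep [(.insE e v w l, true), (.insV v' l', false)]
        [(.insV v' l', false), (.insE e v w l, true)]
  | insP_delP_same (x : ι) (k : K) (d : D) :
      RewStep [(.insP x k d, true), (.delP x k, false)] []
  | insP_delP_ne (x y : ι) (k k' : K) (d : D) (h : ¬(x = y ∧ k = k')) :
      RewStep [(.insP x k d, true), (.delP y k', false)]
        [(.delP y k', false), (.insP x k d, true)]
  | insP_delE (x : ι) (k : K) (d : D) (e : ι) :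
      RewStep [(.insP x k d, true), (.delE e, false)] [(.delE e, false), (.insP x k d, true)]
  | insP_delV (x : ι) (k : K) (d : D) (v : ι) :
      RewStep [(.insP x k d, true), (.delV v, false)] [(.delV v, false), (.insP x k d, true)]
  | insP_updP_same (x : ι) (k : K) (d d' : D) :
      RewStep [(.insP x k d, true), (.updP x k d', false)] [(.insP x k d', true)]
  | insP_updP_ne (x y : ι) (k k' : K) (d d' : D) (h : ¬(x = y ∧ k = k')) :
      RewStep [(.insP x k d, true), (.updP y k' d', false)]
        [(.updP y k' d', false), (.insP x k d, true)]
  | insP_insV (x : ι) (k : K) (d : D) (v : ι) (l : L) :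
      RewStep [(.insP x k d, true), (.insV v l, false)] [(.insV v l, false), (.insP x k d, true)]
  | insP_insE (x : ι) (k : K) (d : D) (e v w : ι) (l : L) :
      RewStep [(.insP x k d, true), (.insE e v w l, false)]
        [(.insE e v w l, false), (.insP x k d, true)]
  | unmark (op : EditOp ι L K D) :
      RewStep [(op, true)] [(op, false)]

/-- One rewrite step on a marked edit script: apply one of the rules at the
position of the marked operation (everything before it is unmarked). -/
def Rew (m m' : List (MOp ι L K D)) : Prop :=
  ∃ pre a b post : List (MOp ι L K D),
    (∀ p ∈ pre, p.2 = false) ∧ RewStep a b ∧ m = pre ++ a ++ post ∧ m' = pre ++ b ++ post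

/-- The `*`-length of a marked script: the length of the suffix beginning at
the (first) marked operation, or `0` if there is none. -/
def starLen : List (MOp ι L K D) → ℕ
  | [] => 0
  | (_, b) :: rest => if b then rest.length + 1 else starLen rest

section PartialIso

variable [DecidableEq ι]

/-- A partial isomorphism between two property graphs, represented as a
partial map on identifiers: injective, matching nodes to nodes and edges to
edges with equal labels, and matching the endpoints of matched edges. -/
def IsPartialIso (G1 G2 : PreGraph ι L K D) (h : ι → Option ι) : Prop :=
  (∀ x y, h x = some y → (x ∈ G1.V ∧ y ∈ G2.V) ∨ (x ∈ G1.E ∧ y ∈ G2.E)) ∧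
  (∀ x x' y, h x = some y → h x' = some y → x = x') ∧
  (∀ x y, h x = some y → G2.lab y = G1.lab x) ∧
  (∀ e e' v, h e = some e' → G1.src e = some v → h v = G2.src e') ∧
  (∀ e e' v, h e = some e' → G1.tgt e = some v → h v = G2.tgt e')

/-- The nodes and edges of `G1` left unmatched by `h`. -/
def unmatchedL (G1 : PreGraph ι L K D) (h : ι → Option ι) : Finset ι :=
  (G1.V ∪ G1.E).filter fun x => h x = none

/-- The nodes and edges of `G2` left unmatched by `h`. -/
def unmatchedR (G1 G2 : PreGraph ι L K D) (h : ι → Option ι) : Finset ι :=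
  (G2.V ∪ G2.E).filter fun y => ∀ x ∈ G1.V ∪ G1.E, h x ≠ some y

/-- The number of defined properties on a given object of a graph. -/
def propsOn [Fintype K] (G : PreGraph ι L K D) (x : ι) : ℕ :=
  (Finset.univ.filter fun k : K => (G.prop x k).isSome).card

/-- The number of keys at which the properties of a matched pair disagree
(defined with different values, or defined on only one side). -/
def mismatchCount [Fintype K] [DecidableEq D] (G1 G2 : PreGraph ι L K D) (x y : ι) : ℕ :=
  (Finset.univ.filter fun k : K => G1.prop x k ≠ G2.prop y k).card

/-- The cost of a partial isomorphism: unmatched nodes and edges on both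
sides, mismatched properties of matched pairs, and all properties on
unmatched objects of both sides. -/
def pisoCost [Fintype K] [DecidableEq D] (G1 G2 : PreGraph ι L K D) (h : ι → Option ι) : ℕ :=
  (unmatchedL G1 h).card + (unmatchedR G1 G2 h).card +
  (∑ x ∈ G1.V ∪ G1.E, (h x).elim 0 fun y => mismatchCount G1 G2 x y) +
  (∑ x ∈ unmatchedL G1 h, propsOn G1 x) +
  (∑ y ∈ unmatchedR G1 G2 h, propsOn G2 y)

end PartialIso

section CanonicalProof

/-- Rank of an edit operation in the canonical order. -/
def erank : EditOp ι L K D → ℕ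
  | .delP _ _ => 0
  | .delE _ => 1
  | .delV _ => 2
  | .updP _ _ _ => 3
  | .insV _ _ => 4
  | .insE _ _ _ _ => 5
  | .insP _ _ _ => 6

theorem PreGraph.ext' {G H : PreGraph ι L K D} (hV : G.V = H.V) (hE : G.E = H.E)
    (hsrc : ∀ x, G.src x = H.src x) (htgt : ∀ x, G.tgt x = H.tgt x)
    (hlab : ∀ x, G.lab x = H.lab x) (hprop : ∀ x k, G.prop x k = H.prop x k) : G = H := by
  cases G; cases H
  simp only [PreGraph.mk.injEq]
  exact ⟨hV, hE, funext hsrc, funext htgt, funext hlab, funext fun x => funext (hprop x)⟩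

section Main

variable [DecidableEq ι] [DecidableEq K]

private theorem block_nil {a : EditOp ι L K D} {l B : List (EditOp ι L K D)}
    (hsub : ∀ o ∈ B, o ∈ l) (hrel : ∀ b ∈ l, erank a ≤ erank b)
    (hrk : ∀ o ∈ B, erank o < erank a) : B = [] := by
  cases B with
  | nil => rfl
  | cons p ps =>
    exact absurd (hrel p (hsub p (by simp))) (Nat.not_le.mpr (hrk p (by simp)))

theorem canonical_of_sorted :
    ∀ ops : List (EditOp ι L K D),
      ops.Pairwise (fun a b => erank a ≤ erank b) → Canonical ops := by
  intro ops h
  induction ops with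
  | nil =>
    exact ⟨[], [], [], [], [], [], [], by simp, by simp, by simp, by simp, by simp,
      by simp, by simp, by simp⟩
  | cons a l ih =>
    rw [List.pairwise_cons] at h
    obtain ⟨hrel, hl⟩ := h
    obtain ⟨dp, de, dv, up, iv, ie, ip, heq, hdp, hde, hdv, hup, hiv, hie, hip⟩ := ih hl
    subst heq
    have hsdp : ∀ o ∈ dp, o ∈ dp ++ de ++ dv ++ up ++ iv ++ ie ++ ip := by intro o ho; simp [ho]
    have hsde : ∀ o ∈ de, o ∈ dp ++ de ++ dv ++ up ++ iv ++ ie ++ ip := by intro o ho; simp [ho]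
    have hsdv : ∀ o ∈ dv, o ∈ dp ++ de ++ dv ++ up ++ iv ++ ie ++ ip := by intro o ho; simp [ho]
    have hsup : ∀ o ∈ up, o ∈ dp ++ de ++ dv ++ up ++ iv ++ ie ++ ip := by intro o ho; simp [ho]
    have hsiv : ∀ o ∈ iv, o ∈ dp ++ de ++ dv ++ up ++ iv ++ ie ++ ip := by intro o ho; simp [ho]
    have hsie : ∀ o ∈ ie, o ∈ dp ++ de ++ dv ++ up ++ iv ++ ie ++ ip := by intro o ho; simp [ho]
    cases a with
    | delP x k =>
      refine ⟨.delP x k :: dp, de, dv, up, iv, ie, ip, by simp, ?_, hde, hdv, hup, hiv, hie, hip⟩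
      intro o ho
      rcases List.mem_cons.mp ho with rfl | ho
      exacts [⟨x, k, rfl⟩, hdp o ho]
    | delE e =>
      have h0 : dp = [] := block_nil hsdp hrel fun o ho => by
        obtain ⟨x, k, rfl⟩ := hdp o ho; simp [erank]
      refine ⟨[], .delE e :: de, dv, up, iv, ie, ip, by simp [h0], by simp, ?_, hdv, hup, hiv, hie, hip⟩
      intro o ho
      rcases List.mem_cons.mp ho with rfl | ho
      exacts [⟨e, rfl⟩, hde o ho]
    | delV v =>
      have h0 : dp = [] := block_nil hsdp hrel fun o ho => by
        obtain ⟨x, k, rfl⟩ := hdp o ho; simp [erank]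
      have h1 : de = [] := block_nil hsde hrel fun o ho => by
        obtain ⟨e, rfl⟩ := hde o ho; simp [erank]
      refine ⟨[], [], .delV v :: dv, up, iv, ie, ip, by simp [h0, h1], by simp, by simp, ?_,
        hup, hiv, hie, hip⟩
      intro o ho
      rcases List.mem_cons.mp ho with rfl | ho
      exacts [⟨v, rfl⟩, hdv o ho]
    | updP x k d =>
      have h0 : dp = [] := block_nil hsdp hrel fun o ho => by
        obtain ⟨x, k, rfl⟩ := hdp o ho; simp [erank]
      have h1 : de = [] := block_nil hsde hrel fun o ho => by
        obtain ⟨e, rfl⟩ := hde o ho; simp [erank]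
      have h2 : dv = [] := block_nil hsdv hrel fun o ho => by
        obtain ⟨v, rfl⟩ := hdv o ho; simp [erank]
      refine ⟨[], [], [], .updP x k d :: up, iv, ie, ip, by simp [h0, h1, h2], by simp, by simp,
        by simp, ?_, hiv, hie, hip⟩
      intro o ho
      rcases List.mem_cons.mp ho with rfl | ho
      exacts [⟨x, k, d, rfl⟩, hup o ho]
    | insV v l =>
      have h0 : dp = [] := block_nil hsdp hrel fun o ho => by
        obtain ⟨x, k, rfl⟩ := hdp o ho; simp [erank]
      have h1 : de = [] := block_nil hsde hrel fun o ho => by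
        obtain ⟨e, rfl⟩ := hde o ho; simp [erank]
      have h2 : dv = [] := block_nil hsdv hrel fun o ho => by
        obtain ⟨v, rfl⟩ := hdv o ho; simp [erank]
      have h3 : up = [] := block_nil hsup hrel fun o ho => by
        obtain ⟨x, k, d, rfl⟩ := hup o ho; simp [erank]
      refine ⟨[], [], [], [], .insV v l :: iv, ie, ip, by simp [h0, h1, h2, h3], by simp, by simp,
        by simp, by simp, ?_, hie, hip⟩
      intro o ho
      rcases List.mem_cons.mp ho with rfl | ho
      exacts [⟨v, l, rfl⟩, hiv o ho]
    | insE e v w l =>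
      have h0 : dp = [] := block_nil hsdp hrel fun o ho => by
        obtain ⟨x, k, rfl⟩ := hdp o ho; simp [erank]
      have h1 : de = [] := block_nil hsde hrel fun o ho => by
        obtain ⟨e, rfl⟩ := hde o ho; simp [erank]
      have h2 : dv = [] := block_nil hsdv hrel fun o ho => by
        obtain ⟨v, rfl⟩ := hdv o ho; simp [erank]
      have h3 : up = [] := block_nil hsup hrel fun o ho => by
        obtain ⟨x, k, d, rfl⟩ := hup o ho; simp [erank]
      have h4 : iv = [] := block_nil hsiv hrel fun o ho => by
        obtain ⟨v, l, rfl⟩ := hiv o ho; simp [erank]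
      refine ⟨[], [], [], [], [], .insE e v w l :: ie, ip, by simp [h0, h1, h2, h3, h4], by simp,
        by simp, by simp, by simp, by simp, ?_, hip⟩
      intro o ho
      rcases List.mem_cons.mp ho with rfl | ho
      exacts [⟨e, v, w, l, rfl⟩, hie o ho]
    | insP x k d =>
      have h0 : dp = [] := block_nil hsdp hrel fun o ho => by
        obtain ⟨x, k, rfl⟩ := hdp o ho; simp [erank]
      have h1 : de = [] := block_nil hsde hrel fun o ho => by
        obtain ⟨e, rfl⟩ := hde o ho; simp [erank]
      have h2 : dv = [] := block_nil hsdv hrel fun o ho => by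
        obtain ⟨v, rfl⟩ := hdv o ho; simp [erank]
      have h3 : up = [] := block_nil hsup hrel fun o ho => by
        obtain ⟨x, k, d, rfl⟩ := hup o ho; simp [erank]
      have h4 : iv = [] := block_nil hsiv hrel fun o ho => by
        obtain ⟨v, l, rfl⟩ := hiv o ho; simp [erank]
      have h5 : ie = [] := block_nil hsie hrel fun o ho => by
        obtain ⟨e, v, w, l, rfl⟩ := hie o ho; simp [erank]
      refine ⟨[], [], [], [], [], [], .insP x k d :: ip, by simp [h0, h1, h2, h3, h4, h5],
        by simp, by simp, by simp, by simp, by simp, by simp, ?_⟩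
      intro o ho
      rcases List.mem_cons.mp ho with rfl | ho
      exacts [⟨x, k, d, rfl⟩, hip o ho]

theorem isPGraph_applyOp {G : PreGraph ι L K D} (hG : IsPGraph G) {op : EditOp ι L K D}
    (hop : Applicable op G) : IsPGraph (applyOp op G) := by
  cases op with
  | insV v l =>
    rw [show Applicable (.insV v l) G = (v ∉ G.V ∪ G.E) from rfl, Finset.mem_union, not_or] at hop
    refine ⟨Finset.disjoint_insert_left.mpr ⟨hop.2, hG.disj⟩, hG.src_dom, hG.tgt_dom,
      fun e u h => Finset.mem_insert_of_mem (hG.src_mem e u h),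
      fun e u h => Finset.mem_insert_of_mem (hG.tgt_mem e u h), ?_, ?_⟩
    · intro x
      show (if x = v then some l else G.lab x).isSome ↔ x ∈ insert v G.V ∪ G.E
      by_cases hx : x = v
      · subst hx; simp
      · rw [if_neg hx, hG.lab_dom]; simp [hx]
    · intro x k h
      have := hG.prop_dom x k h
      show x ∈ insert v G.V ∪ G.E
      simp only [Finset.mem_union, Finset.mem_insert] at this ⊢
      tauto
  | insE e v w l =>
    obtain ⟨hvV, hwV, heN⟩ := hop
    rw [Finset.mem_union, not_or] at heN
    refine ⟨Finset.disjoint_insert_right.mpr ⟨heN.1, hG.disj⟩, ?_, ?_, ?_, ?_, ?_, ?_⟩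
    · intro e'
      show (if e' = e then some v else G.src e').isSome ↔ e' ∈ insert e G.E
      by_cases hx : e' = e
      · subst hx; simp
      · rw [if_neg hx, hG.src_dom]; simp [hx]
    · intro e'
      show (if e' = e then some w else G.tgt e').isSome ↔ e' ∈ insert e G.E
      by_cases hx : e' = e
      · subst hx; simp
      · rw [if_neg hx, hG.tgt_dom]; simp [hx]
    · intro e' u h
      show u ∈ G.V
      by_cases hx : e' = e
      · simp only [applyOp, hx, if_pos rfl] at h
        obtain rfl := Option.some.inj h
        exact hvV
      · simp only [applyOp, if_neg hx] at h
        exact hG.src_mem e' u h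
    · intro e' u h
      show u ∈ G.V
      by_cases hx : e' = e
      · simp only [applyOp, hx, if_pos rfl] at h
        obtain rfl := Option.some.inj h
        exact hwV
      · simp only [applyOp, if_neg hx] at h
        exact hG.tgt_mem e' u h
    · intro x
      show (if x = e then some l else G.lab x).isSome ↔ x ∈ G.V ∪ insert e G.E
      by_cases hx : x = e
      · subst hx; simp
      · rw [if_neg hx, hG.lab_dom]; simp [hx]
    · intro x k h
      have := hG.prop_dom x k h
      show x ∈ G.V ∪ insert e G.E
      simp only [Finset.mem_union, Finset.mem_insert] at this ⊢
      tauto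
  | insP x k d =>
    obtain ⟨hxm, hxn⟩ := hop
    refine ⟨hG.disj, hG.src_dom, hG.tgt_dom, hG.src_mem, hG.tgt_mem, hG.lab_dom, ?_⟩
    intro y k' h
    show y ∈ G.V ∪ G.E
    by_cases hc : y = x ∧ k' = k
    · exact hc.1 ▸ hxm
    · simp only [applyOp, if_neg hc] at h
      exact hG.prop_dom y k' h
  | delV v =>
    obtain ⟨hvV, hedges, hprops⟩ := hop
    refine ⟨hG.disj.mono_left (Finset.erase_subset _ _), hG.src_dom, hG.tgt_dom, ?_, ?_, ?_, ?_⟩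
    · intro e u h
      have he : e ∈ G.E := (hG.src_dom e).mp (by rw [show G.src e = some u from h]; rfl)
      refine Finset.mem_erase.mpr ⟨?_, hG.src_mem e u h⟩
      rintro rfl
      exact (hedges e he).1 h
    · intro e u h
      have he : e ∈ G.E := (hG.tgt_dom e).mp (by rw [show G.tgt e = some u from h]; rfl)
      refine Finset.mem_erase.mpr ⟨?_, hG.tgt_mem e u h⟩
      rintro rfl
      exact (hedges e he).2 h
    · intro x
      show (if x = v then none else G.lab x).isSome ↔ x ∈ G.V.erase v ∪ G.E
      by_cases hx : x = v
      · subst hx; simp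
        exact Finset.disjoint_left.mp hG.disj hvV
      · rw [if_neg hx, hG.lab_dom]; simp [hx]
    · intro x k h
      have hx := hG.prop_dom x k h
      show x ∈ G.V.erase v ∪ G.E
      simp only [Finset.mem_union, Finset.mem_erase] at hx ⊢
      rcases hx with h1 | h2
      · left
        refine ⟨?_, h1⟩
        rintro rfl
        rw [show (applyOp (.delV x) G).prop x k = G.prop x k from rfl, hprops k] at h
        simp at h
      · right; exact h2
  | delE e =>
    obtain ⟨heE, hprops⟩ := hop
    refine ⟨hG.disj.mono_right (Finset.erase_subset _ _), ?_, ?_, ?_, ?_, ?_, ?_⟩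
    · intro e'
      show (if e' = e then none else G.src e').isSome ↔ e' ∈ G.E.erase e
      by_cases hx : e' = e
      · subst hx; simp
      · rw [if_neg hx, hG.src_dom]; simp [hx]
    · intro e'
      show (if e' = e then none else G.tgt e').isSome ↔ e' ∈ G.E.erase e
      by_cases hx : e' = e
      · subst hx; simp
      · rw [if_neg hx, hG.tgt_dom]; simp [hx]
    · intro e' u h
      show u ∈ G.V
      by_cases hx : e' = e
      · simp only [applyOp, if_pos hx] at h; exact absurd h (by simp)
      · simp only [applyOp, if_neg hx] at h; exact hG.src_mem e' u h
    · intro e' u h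
      show u ∈ G.V
      by_cases hx : e' = e
      · simp only [applyOp, if_pos hx] at h; exact absurd h (by simp)
      · simp only [applyOp, if_neg hx] at h; exact hG.tgt_mem e' u h
    · intro x
      show (if x = e then none else G.lab x).isSome ↔ x ∈ G.V ∪ G.E.erase e
      by_cases hx : x = e
      · subst hx; simp
        exact Finset.disjoint_right.mp hG.disj heE
      · rw [if_neg hx, hG.lab_dom]; simp [hx]
    · intro x k h
      have hx := hG.prop_dom x k h
      show x ∈ G.V ∪ G.E.erase e
      simp only [Finset.mem_union, Finset.mem_erase] at hx ⊢
      rcases hx with h1 | h2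
      · left; exact h1
      · right
        refine ⟨?_, h2⟩
        rintro rfl
        rw [show (applyOp (.delE x) G).prop x k = G.prop x k from rfl, hprops k] at h
        simp at h
  | delP x k =>
    refine ⟨hG.disj, hG.src_dom, hG.tgt_dom, hG.src_mem, hG.tgt_mem, hG.lab_dom, ?_⟩
    intro y k' h
    show y ∈ G.V ∪ G.E
    by_cases hc : y = x ∧ k' = k
    · simp only [applyOp, if_pos hc] at h; simp at h
    · simp only [applyOp, if_neg hc] at h
      exact hG.prop_dom y k' h
  | updP x k d =>
    refine ⟨hG.disj, hG.src_dom, hG.tgt_dom, hG.src_mem, hG.tgt_mem, hG.lab_dom, ?_⟩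
    intro y k' h
    show y ∈ G.V ∪ G.E
    by_cases hc : y = x ∧ k' = k
    · exact hc.1 ▸ hG.prop_dom x k hop
    · simp only [applyOp, if_neg hc] at h
      exact hG.prop_dom y k' h

theorem swap_comm {G : PreGraph ι L K D} (hG : IsPGraph G) {op b : EditOp ι L K D}
    (hop : Applicable op G) (hb : Applicable b (applyOp op G)) (hrk : erank b < erank op) :
    applyOp b (applyOp op G) = G ∨
    (Applicable b G ∧ applyOp b (applyOp op G) = applyOp b G) ∨
    (∃ op', erank op' = erank op ∧ Applicable op' G ∧
      applyOp b (applyOp op G) = applyOp op' G) ∨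
    (Applicable b G ∧ Applicable op (applyOp b G) ∧
      applyOp b (applyOp op G) = applyOp op (applyOp b G)) := by
  cases op with
  | delP x k => exact absurd hrk (by cases b <;> simp [erank])
  | delE e =>
    cases b with
    | delP x k =>
      obtain ⟨heE, hprops⟩ := hop
      refine Or.inr (Or.inr (Or.inr ⟨hb, ⟨heE, fun k' => ?_⟩, rfl⟩))
      show (if e = x ∧ k' = k then none else G.prop e k') = none
      split_ifs with h
      · rfl
      · exact hprops k'
    | _ => exact absurd hrk (by simp [erank])
  | delV v =>
    obtain ⟨hvV, hedges, hprops⟩ := hop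
    cases b with
    | delP x k =>
      refine Or.inr (Or.inr (Or.inr ⟨hb, ⟨hvV, hedges, fun k' => ?_⟩, rfl⟩))
      show (if v = x ∧ k' = k then none else G.prop v k') = none
      split_ifs with h
      · rfl
      · exact hprops k'
    | delE e =>
      refine Or.inr (Or.inr (Or.inr ⟨hb, ⟨hvV, ?_, hprops⟩, ?_⟩))
      · intro e' he'
        obtain ⟨hne, heE⟩ := Finset.mem_erase.mp he'
        constructor
        · show (if e' = e then none else G.src e') ≠ some v
          rw [if_neg hne]; exact (hedges e' heE).1
        · show (if e' = e then none else G.tgt e') ≠ some v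
          rw [if_neg hne]; exact (hedges e' heE).2
      · refine PreGraph.ext' rfl rfl (fun _ => rfl) (fun _ => rfl) (fun x => ?_) (fun _ _ => rfl)
        show (if x = e then none else if x = v then none else G.lab x)
            = (if x = v then none else if x = e then none else G.lab x)
        split_ifs <;> rfl
    | _ => exact absurd hrk (by simp [erank])
  | updP x k d =>
    cases b with
    | delP y k' =>
      by_cases hc : y = x ∧ k' = k
      · obtain ⟨rfl, rfl⟩ := hc
        refine Or.inr (Or.inl ⟨hop, ?_⟩)
        refine PreGraph.ext' rfl rfl (fun _ => rfl) (fun _ => rfl) (fun _ => rfl)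
          (fun z k'' => ?_)
        show (if z = y ∧ k'' = k' then none else if z = y ∧ k'' = k' then some d else G.prop z k'')
            = (if z = y ∧ k'' = k' then none else G.prop z k'')
        split_ifs <;> rfl
      · have hc' : ¬(x = y ∧ k = k') := fun h => hc ⟨h.1.symm, h.2.symm⟩
        refine Or.inr (Or.inr (Or.inr ⟨?_, ?_, ?_⟩))
        · show ((G.prop y k').isSome : Prop)
          have hb' : ((if y = x ∧ k' = k then some d else G.prop y k')).isSome := hb
          rwa [if_neg hc] at hb'
        · show ((if x = y ∧ k = k' then none else G.prop x k).isSome : Prop)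
          rwa [if_neg hc']
        · refine PreGraph.ext' rfl rfl (fun _ => rfl) (fun _ => rfl) (fun _ => rfl)
            (fun z k'' => ?_)
          show (if z = y ∧ k'' = k' then none else if z = x ∧ k'' = k then some d else G.prop z k'')
              = (if z = x ∧ k'' = k then some d else if z = y ∧ k'' = k' then none else G.prop z k'')
          split_ifs with h1 h2 <;> try rfl
          · exact absurd ⟨h2.1.symm.trans h1.1, h2.2.symm.trans h1.2⟩ hc'
      | delE e =>
        obtain ⟨heE, hprops⟩ := hb
        refine Or.inr (Or.inr (Or.inr ⟨⟨heE, fun k' => ?_⟩, hop, rfl⟩))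
        have h2 : (if e = x ∧ k' = k then some d else G.prop e k') = none := hprops k'
        by_cases hc : e = x ∧ k' = k
        · rw [if_pos hc] at h2; exact absurd h2 (by simp)
        · rwa [if_neg hc] at h2
      | delV v =>
        obtain ⟨hvV, hedges, hprops⟩ := hb
        refine Or.inr (Or.inr (Or.inr ⟨⟨hvV, hedges, fun k' => ?_⟩, hop, rfl⟩))
        have h2 : (if v = x ∧ k' = k then some d else G.prop v k') = none := hprops k'
        by_cases hc : v = x ∧ k' = k
        · rw [if_pos hc] at h2; exact absurd h2 (by simp)
        · rwa [if_neg hc] at h2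
      | _ => exact absurd hrk (by simp [erank])
  | insV v l =>
    have hvV : v ∉ G.V := fun h => hop (Finset.mem_union_left _ h)
    have hvE : v ∉ G.E := fun h => hop (Finset.mem_union_right _ h)
    cases b with
    | delP y k' => exact Or.inr (Or.inr (Or.inr ⟨hb, hop, rfl⟩))
    | delE e =>
      obtain ⟨heE, hprops⟩ := hb
      have hne : v ≠ e := fun h => hvE (h ▸ heE)
      refine Or.inr (Or.inr (Or.inr ⟨⟨heE, hprops⟩, ?_, ?_⟩))
      · show v ∉ G.V ∪ G.E.erase e
        simp only [Finset.mem_union, Finset.mem_erase, not_or]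
        exact ⟨hvV, fun h => hvE h.2⟩
      · refine PreGraph.ext' rfl rfl (fun _ => rfl) (fun _ => rfl) (fun z => ?_) (fun _ _ => rfl)
        show (if z = e then none else if z = v then some l else G.lab z)
            = (if z = v then some l else if z = e then none else G.lab z)
        split_ifs with h1 h2 <;> try rfl
        · exact absurd (h2.symm.trans h1) hne
    | delV v' =>
      by_cases hvv : v = v'
      · subst hvv
        refine Or.inl ?_
        have hnone : G.lab v = none := by
          rw [← Option.not_isSome_iff_eq_none, hG.lab_dom]
          exact hop
        refine PreGraph.ext' (Finset.erase_insert hvV) rfl (fun _ => rfl) (fun _ => rfl)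
          (fun z => ?_) (fun _ _ => rfl)
        show (if z = v then none else if z = v then some l else G.lab z) = G.lab z
        split_ifs with h
        · subst h; exact hnone.symm
        · rfl
      · obtain ⟨hv'm, hedges, hprops⟩ := hb
        have hv'V : v' ∈ G.V := by
          rcases Finset.mem_insert.mp hv'm with h | h
          · exact absurd h.symm hvv
          · exact h
        refine Or.inr (Or.inr (Or.inr ⟨⟨hv'V, hedges, hprops⟩, ?_, ?_⟩))
        · show v ∉ G.V.erase v' ∪ G.E
          simp only [Finset.mem_union, Finset.mem_erase, not_or]
          exact ⟨fun h => hvV h.2, hvE⟩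
        · refine PreGraph.ext' (by show (insert v G.V).erase v' = insert v (G.V.erase v'); exact Finset.erase_insert_of_ne hvv) rfl (fun _ => rfl)
            (fun _ => rfl) (fun z => ?_) (fun _ _ => rfl)
          show (if z = v' then none else if z = v then some l else G.lab z)
              = (if z = v then some l else if z = v' then none else G.lab z)
          split_ifs with h1 h2 <;> try rfl
          · exact absurd (h2.symm.trans h1) hvv
    | updP y k' d => exact Or.inr (Or.inr (Or.inr ⟨hb, hop, rfl⟩))
    | _ => exact absurd hrk (by simp [erank])
  | insE e v w l =>
    obtain ⟨hvV, hwV, heN⟩ := hop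
    have heV : e ∉ G.V := fun h => heN (Finset.mem_union_left _ h)
    have heE : e ∉ G.E := fun h => heN (Finset.mem_union_right _ h)
    cases b with
    | delP y k' => exact Or.inr (Or.inr (Or.inr ⟨hb, ⟨hvV, hwV, heN⟩, rfl⟩))
    | delE e' =>
      by_cases hee : e = e'
      · subst hee
        refine Or.inl ?_
        have hsrc : G.src e = none := by
          rw [← Option.not_isSome_iff_eq_none, hG.src_dom]; exact heE
        have htgt : G.tgt e = none := by
          rw [← Option.not_isSome_iff_eq_none, hG.tgt_dom]; exact heE
        have hlab : G.lab e = none := by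
          rw [← Option.not_isSome_iff_eq_none, hG.lab_dom]; exact heN
        refine PreGraph.ext' rfl (Finset.erase_insert heE) (fun z => ?_) (fun z => ?_)
          (fun z => ?_) (fun _ _ => rfl)
        · show (if z = e then none else if z = e then some v else G.src z) = G.src z
          split_ifs with h
          · subst h; exact hsrc.symm
          · rfl
        · show (if z = e then none else if z = e then some w else G.tgt z) = G.tgt z
          split_ifs with h
          · subst h; exact htgt.symm
          · rfl
        · show (if z = e then none else if z = e then some l else G.lab z) = G.lab z
          split_ifs with h
          · subst h; exact hlab.symm
          · rfl
      · obtain ⟨he'm, hprops⟩ := hb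
        have he'E : e' ∈ G.E := by
          rcases Finset.mem_insert.mp he'm with h | h
          · exact absurd h.symm hee
          · exact h
        refine Or.inr (Or.inr (Or.inr ⟨⟨he'E, hprops⟩, ⟨hvV, hwV, ?_⟩, ?_⟩))
        · show e ∉ G.V ∪ G.E.erase e'
          simp only [Finset.mem_union, Finset.mem_erase, not_or]
          exact ⟨heV, fun h => heE h.2⟩
        · refine PreGraph.ext' rfl (by show (insert e G.E).erase e' = insert e (G.E.erase e'); exact Finset.erase_insert_of_ne hee) (fun z => ?_)
            (fun z => ?_) (fun z => ?_) (fun _ _ => rfl)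
          · show (if z = e' then none else if z = e then some v else G.src z)
                = (if z = e then some v else if z = e' then none else G.src z)
            split_ifs with h1 h2 <;> try rfl
            · exact absurd (h2.symm.trans h1) hee
          · show (if z = e' then none else if z = e then some w else G.tgt z)
                = (if z = e then some w else if z = e' then none else G.tgt z)
            split_ifs with h1 h2 <;> try rfl
            · exact absurd (h2.symm.trans h1) hee
          · show (if z = e' then none else if z = e then some l else G.lab z)
                = (if z = e then some l else if z = e' then none else G.lab z)
            split_ifs with h1 h2 <;> try rfl
            · exact absurd (h2.symm.trans h1) hee
    | delV v' =>
      obtain ⟨hv'V, hedges, hprops⟩ := hb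
      have hsrc_e := (hedges e (Finset.mem_insert_self _ _)).1
      have htgt_e := (hedges e (Finset.mem_insert_self _ _)).2
      rw [show (applyOp (.insE e v w l) G).src e = some v from by simp [applyOp]] at hsrc_e
      rw [show (applyOp (.insE e v w l) G).tgt e = some w from by simp [applyOp]] at htgt_e
      have hvne : v ≠ v' := fun h => hsrc_e (by rw [h])
      have hwne : w ≠ v' := fun h => htgt_e (by rw [h])
      have hev' : e ≠ v' := fun h => heV (h ▸ hv'V)
      refine Or.inr (Or.inr (Or.inr ⟨⟨hv'V, fun e' he' => ?_, hprops⟩,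
        ⟨Finset.mem_erase.mpr ⟨hvne, hvV⟩, Finset.mem_erase.mpr ⟨hwne, hwV⟩, ?_⟩, ?_⟩))
      · have hne : e' ≠ e := fun h => heE (h ▸ he')
        have h1 := hedges e' (Finset.mem_insert_of_mem he')
        constructor
        · have := h1.1
          rwa [show (applyOp (.insE e v w l) G).src e' = G.src e' from by
            simp only [applyOp, if_neg hne]] at this
        · have := h1.2
          rwa [show (applyOp (.insE e v w l) G).tgt e' = G.tgt e' from by
            simp only [applyOp, if_neg hne]] at this
      · show e ∉ G.V.erase v' ∪ G.E
        simp only [Finset.mem_union, Finset.mem_erase, not_or]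
        exact ⟨fun h => heV h.2, heE⟩
      · refine PreGraph.ext' rfl rfl (fun _ => rfl) (fun _ => rfl) (fun z => ?_) (fun _ _ => rfl)
        show (if z = v' then none else if z = e then some l else G.lab z)
            = (if z = e then some l else if z = v' then none else G.lab z)
        split_ifs with h1 h2 <;> try rfl
        · exact absurd (h2.symm.trans h1) hev'
    | updP y k' d => exact Or.inr (Or.inr (Or.inr ⟨hb, ⟨hvV, hwV, heN⟩, rfl⟩))
    | insV v'' l'' =>
      have hb' : v'' ∉ G.V ∪ insert e G.E := hb
      simp only [Finset.mem_union, Finset.mem_insert, not_or] at hb'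
      obtain ⟨h1, h2, h3⟩ := hb'
      refine Or.inr (Or.inr (Or.inr ⟨?_, ⟨Finset.mem_insert_of_mem hvV,
        Finset.mem_insert_of_mem hwV, ?_⟩, ?_⟩))
      · show v'' ∉ G.V ∪ G.E
        simp only [Finset.mem_union, not_or]
        exact ⟨h1, h3⟩
      · show e ∉ insert v'' G.V ∪ G.E
        simp only [Finset.mem_union, Finset.mem_insert, not_or]
        exact ⟨⟨fun h => h2 h.symm, heV⟩, heE⟩
      · refine PreGraph.ext' rfl rfl (fun _ => rfl) (fun _ => rfl) (fun z => ?_) (fun _ _ => rfl)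
        show (if z = v'' then some l'' else if z = e then some l else G.lab z)
            = (if z = e then some l else if z = v'' then some l'' else G.lab z)
        split_ifs with h4 h5 <;> try rfl
        · exact absurd (h4.symm.trans h5) h2
    | _ => exact absurd hrk (by simp [erank])
  | insP x k d =>
    obtain ⟨hxm, hxn⟩ := hop
    cases b with
    | delP y k' =>
      by_cases hc : y = x ∧ k' = k
      · obtain ⟨rfl, rfl⟩ := hc
        refine Or.inl ?_
        refine PreGraph.ext' rfl rfl (fun _ => rfl) (fun _ => rfl) (fun _ => rfl)
          (fun z k'' => ?_)
        show (if z = y ∧ k'' = k' then none else if z = y ∧ k'' = k' then some d else G.prop z k'')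
            = G.prop z k''
        split_ifs with h
        · rw [h.1, h.2]; exact hxn.symm
        · rfl
      · have hc' : ¬(x = y ∧ k = k') := fun h => hc ⟨h.1.symm, h.2.symm⟩
        refine Or.inr (Or.inr (Or.inr ⟨?_, ⟨hxm, ?_⟩, ?_⟩))
        · show ((G.prop y k').isSome : Prop)
          have hb' : ((if y = x ∧ k' = k then some d else G.prop y k')).isSome := hb
          rwa [if_neg hc] at hb'
        · show (if x = y ∧ k = k' then none else G.prop x k) = none
          rw [if_neg hc']; exact hxn
        · refine PreGraph.ext' rfl rfl (fun _ => rfl) (fun _ => rfl) (fun _ => rfl)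
            (fun z k'' => ?_)
          show (if z = y ∧ k'' = k' then none else if z = x ∧ k'' = k then some d else G.prop z k'')
              = (if z = x ∧ k'' = k then some d else if z = y ∧ k'' = k' then none else G.prop z k'')
          split_ifs with h1 h2 <;> try rfl
          · exact absurd ⟨h2.1.symm.trans h1.1, h2.2.symm.trans h1.2⟩ hc'
    | delE e' =>
      obtain ⟨he'E, hprops⟩ := hb
      have hxe : x ≠ e' := by
        intro h
        have h2 : (if e' = x ∧ k = k then some d else G.prop e' k) = none := hprops k
        rw [if_pos ⟨h.symm, rfl⟩] at h2
        exact absurd h2 (by simp)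
      refine Or.inr (Or.inr (Or.inr ⟨⟨he'E, fun k' => ?_⟩, ⟨?_, hxn⟩, rfl⟩))
      · have h2 : (if e' = x ∧ k' = k then some d else G.prop e' k') = none := hprops k'
        rwa [if_neg (fun hcc => hxe hcc.1.symm)] at h2
      · show x ∈ G.V ∪ G.E.erase e'
        rcases Finset.mem_union.mp hxm with h | h
        · exact Finset.mem_union_left _ h
        · exact Finset.mem_union_right _ (Finset.mem_erase.mpr ⟨hxe, h⟩)
    | delV v' =>
      obtain ⟨hv'V, hedges, hprops⟩ := hb
      have hxv : x ≠ v' := by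
        intro h
        have h2 : (if v' = x ∧ k = k then some d else G.prop v' k) = none := hprops k
        rw [if_pos ⟨h.symm, rfl⟩] at h2
        exact absurd h2 (by simp)
      refine Or.inr (Or.inr (Or.inr ⟨⟨hv'V, hedges, fun k' => ?_⟩, ⟨?_, hxn⟩, rfl⟩))
      · have h2 : (if v' = x ∧ k' = k then some d else G.prop v' k') = none := hprops k'
        rwa [if_neg (fun hcc => hxv hcc.1.symm)] at h2
      · show x ∈ G.V.erase v' ∪ G.E
        rcases Finset.mem_union.mp hxm with h | h
        · exact Finset.mem_union_left _ (Finset.mem_erase.mpr ⟨hxv, h⟩)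
        · exact Finset.mem_union_right _ h
    | updP y k' d' =>
      by_cases hc : y = x ∧ k' = k
      · obtain ⟨rfl, rfl⟩ := hc
        refine Or.inr (Or.inr (Or.inl ⟨.insP y k' d', rfl, ⟨hxm, hxn⟩, ?_⟩))
        refine PreGraph.ext' rfl rfl (fun _ => rfl) (fun _ => rfl) (fun _ => rfl)
          (fun z k'' => ?_)
        show (if z = y ∧ k'' = k' then some d' else if z = y ∧ k'' = k' then some d else G.prop z k'')
            = (if z = y ∧ k'' = k' then some d' else G.prop z k'')
        split_ifs <;> rfl
      · have hc' : ¬(x = y ∧ k = k') := fun h => hc ⟨h.1.symm, h.2.symm⟩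
        refine Or.inr (Or.inr (Or.inr ⟨?_, ⟨hxm, ?_⟩, ?_⟩))
        · show ((G.prop y k').isSome : Prop)
          have hb' : ((if y = x ∧ k' = k then some d else G.prop y k')).isSome := hb
          rwa [if_neg hc] at hb'
        · show (if x = y ∧ k = k' then some d' else G.prop x k) = none
          rw [if_neg hc']; exact hxn
        · refine PreGraph.ext' rfl rfl (fun _ => rfl) (fun _ => rfl) (fun _ => rfl)
            (fun z k'' => ?_)
          show (if z = y ∧ k'' = k' then some d' else if z = x ∧ k'' = k then some d else G.prop z k'')
              = (if z = x ∧ k'' = k then some d else if z = y ∧ k'' = k' then some d' else G.prop z k'')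
          split_ifs with h1 h2 <;> try rfl
          · exact absurd ⟨h2.1.symm.trans h1.1, h2.2.symm.trans h1.2⟩ hc'
    | insV v'' l'' =>
      refine Or.inr (Or.inr (Or.inr ⟨hb, ⟨?_, hxn⟩, rfl⟩))
      show x ∈ insert v'' G.V ∪ G.E
      rcases Finset.mem_union.mp hxm with h | h
      · exact Finset.mem_union_left _ (Finset.mem_insert_of_mem h)
      · exact Finset.mem_union_right _ h
    | insE e'' v'' w'' l'' =>
      refine Or.inr (Or.inr (Or.inr ⟨hb, ⟨?_, hxn⟩, rfl⟩))
      show x ∈ G.V ∪ insert e'' G.E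
      rcases Finset.mem_union.mp hxm with h | h
      · exact Finset.mem_union_left _ h
      · exact Finset.mem_union_right _ (Finset.mem_insert_of_mem h)
    | insP y ky dy => exact absurd hrk (by simp [erank])

theorem applyScript_cons (op : EditOp ι L K D) (l : List (EditOp ι L K D))
    (G : PreGraph ι L K D) : applyScript (op :: l) G = applyScript l (applyOp op G) := rfl

theorem insert_sorted :
    ∀ (c : List (EditOp ι L K D)) (G : PreGraph ι L K D) (op : EditOp ι L K D),
      IsPGraph G → Applicable op G → ValidScript (applyOp op G) c →
      c.Pairwise (fun a b => erank a ≤ erank b) →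
      ∃ c', c'.Pairwise (fun a b => erank a ≤ erank b) ∧ ValidScript G c' ∧
        applyScript c' G = applyScript c (applyOp op G) ∧
        c'.length ≤ c.length + 1 ∧
        ∀ x ∈ c', ∃ y ∈ op :: c, erank x = erank y := by
  intro c
  induction c with
  | nil =>
    intro G op hG hop _ _
    exact ⟨[op], by simp, .cons hop (.nil _), rfl, by simp, by simp⟩
  | cons b rest ih =>
    intro G op hG hop hval hsort
    rw [List.pairwise_cons] at hsort
    obtain ⟨hbrel, hrest⟩ := hsort
    cases hval with
    | cons hbapp hvrest =>
    by_cases hrk : erank op ≤ erank b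
    · refine ⟨op :: b :: rest, ?_, .cons hop (.cons hbapp hvrest), rfl, by simp, ?_⟩
      · rw [List.pairwise_cons]
        refine ⟨?_, List.pairwise_cons.mpr ⟨hbrel, hrest⟩⟩
        intro x hx
        rcases List.mem_cons.mp hx with rfl | hx
        · exact hrk
        · exact le_trans hrk (hbrel x hx)
      · intro x hx
        exact ⟨x, hx, rfl⟩
    · push_neg at hrk
      rcases swap_comm hG hop hbapp hrk with hcan | ⟨hbG, heq⟩ | ⟨op', hrk', hop', heq⟩ |
        ⟨hbG, hopb, heq⟩
      · -- cancel
        refine ⟨rest, hrest, ?_, ?_, ?_, ?_⟩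
        · rw [hcan] at hvrest; exact hvrest
        · rw [applyScript_cons, hcan]
        · simp; omega
        · intro x hx; exact ⟨x, by simp [hx], rfl⟩
      · -- absorb
        refine ⟨b :: rest, List.pairwise_cons.mpr ⟨hbrel, hrest⟩, .cons hbG ?_, ?_, by simp, ?_⟩
        · rw [← heq]; exact hvrest
        · rw [applyScript_cons, applyScript_cons, heq]
        · intro x hx; exact ⟨x, by simp [hx], rfl⟩
      · -- merge
        have hv' : ValidScript (applyOp op' G) rest := by rw [← heq]; exact hvrest
        obtain ⟨c', hs', hvc', happ', hlen', hrk''⟩ := ih G op' hG hop' hv' hrest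
        refine ⟨c', hs', hvc', ?_, by simp; omega, ?_⟩
        · rw [happ', applyScript_cons, heq]
        · intro x hx
          rcases hrk'' x hx with ⟨y, hy, hxy⟩
          rcases List.mem_cons.mp hy with h | h
          · exact ⟨op, by simp, by rw [hxy, h]; exact hrk'⟩
          · exact ⟨y, by simp [h], hxy⟩
      · -- commute
        have hG' := isPGraph_applyOp hG hbG
        have hv' : ValidScript (applyOp op (applyOp b G)) rest := by rw [← heq]; exact hvrest
        obtain ⟨c', hs', hvc', happ', hlen', hrk''⟩ := ih (applyOp b G) op hG' hopb hv' hrest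
        refine ⟨b :: c', ?_, .cons hbG hvc', ?_, by simpa using hlen', ?_⟩
        · rw [List.pairwise_cons]
          refine ⟨?_, hs'⟩
          intro x hx
          rcases hrk'' x hx with ⟨y, hy, hxy⟩
          rcases List.mem_cons.mp hy with h | h
          · rw [hxy, h]; exact le_of_lt hrk
          · rw [hxy]; exact hbrel y h
        · rw [applyScript_cons, applyScript_cons, happ', heq]
        · intro x hx
          rcases List.mem_cons.mp hx with rfl | hx
          · exact ⟨x, by simp, rfl⟩
          · rcases hrk'' x hx with ⟨y, hy, hxy⟩
            rcases List.mem_cons.mp hy with h | h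
            · exact ⟨op, by simp, by rw [hxy, h]⟩
            · exact ⟨y, by simp [h], hxy⟩

end Main
end CanonicalProof

/-- every valid edit script mapping `G1` to `G2` can be replaced by
a canonical edit script mapping `G1` to `G2` of no greater length. -/
theorem exists_canonical_script
    [DecidableEq ι] [DecidableEq K]
    (G1 G2 : PreGraph ι L K D) (hG1 : IsPGraph G1)
    (ops : List (EditOp ι L K D))
    (hvalid : ValidScript G1 ops) (happ : applyScript ops G1 = G2) :
    ∃ ops' : List (EditOp ι L K D), Canonical ops' ∧ ValidScript G1 ops' ∧
      applyScript ops' G1 = G2 ∧ ops'.length ≤ ops.length := by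
  subst happ
  suffices h : ∀ (ops : List (EditOp ι L K D)) (G : PreGraph ι L K D), IsPGraph G →
      ValidScript G ops →
      ∃ c, c.Pairwise (fun a b => erank a ≤ erank b) ∧ ValidScript G c ∧
        applyScript c G = applyScript ops G ∧ c.length ≤ ops.length by
    obtain ⟨c, hs, hv, he, hl⟩ := h ops G1 hG1 hvalid
    exact ⟨c, canonical_of_sorted c hs, hv, he, hl⟩
  intro ops
  induction ops with
  | nil => intro G _ _; exact ⟨[], by simp, .nil _, rfl, le_refl _⟩
  | cons op l ih =>
    intro G hG hv
    cases hv with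
    | cons hop hvl =>
    obtain ⟨c, hs, hvc, he, hl⟩ := ih (applyOp op G) (isPGraph_applyOp hG hop) hvl
    obtain ⟨c', hs', hv', he', hl', -⟩ := insert_sorted c G op hG hop hvc hs
    refine ⟨c', hs', hv', ?_, ?_⟩
    · rw [he', he, applyScript_cons]
    · simp only [List.length_cons]; omega
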